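/- For every infinite cardinal λ there exists a linear order L of cardinality λ which is densely ordered and has no greatest and no least element, such that the set of cuts of L (downward-closed subsets of L) has cardinality strictly greater than λ. -/

import Mathlib

universe u

open Cardinal Set

namespace ManyCutsAux

/-- Functions `K → Bool` with eventually-false values, ordered lexicographically. -/
def BddFun (K : Type u) [LinearOrder K] : Type u :=
  {f : Lex (K → Bool) // ∃ a : K, ∀ b : K, a < b → ofLex f b = false}

noncomputable instance (K : Type u) [LinearOrder K] [WellFoundedLT K] :
    LinearOrder (BddFun K) := by
  unfold BddFun; infer_instance

theorem BddFun.le_def {K : Type u} [LinearOrder K] [WellFoundedLT K] {f g : BddFun K} :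
    f ≤ g ↔ f.val ≤ g.val := Iff.rfl

theorem BddFun.lt_def {K : Type u} [LinearOrder K] [WellFoundedLT K] {f g : BddFun K} :
    f < g ↔ f.val < g.val := Subtype.coe_lt_coe.symm

/-- density of a lex product with a dense no-max second factor -/
theorem denselyOrdered_lex_prod (α β : Type*) [LinearOrder α] [LinearOrder β]
    [DenselyOrdered β] [NoMaxOrder β] : DenselyOrdered (α ×ₗ β) := by
  constructor
  rintro ⟨a1, a2⟩ ⟨b1, b2⟩ h
  rcases Prod.Lex.lt_iff.1 h with h1 | ⟨h1, h2⟩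
  · obtain ⟨c, hc⟩ := exists_gt a2
    exact ⟨toLex (a1, c), Prod.Lex.lt_iff.2 (Or.inr ⟨rfl, hc⟩),
      Prod.Lex.lt_iff.2 (Or.inl h1)⟩
  · obtain ⟨c, hc1, hc2⟩ := exists_between h2
    exact ⟨toLex (a1, c), Prod.Lex.lt_iff.2 (Or.inr ⟨rfl, hc1⟩),
      Prod.Lex.lt_iff.2 (Or.inr ⟨h1, hc2⟩)⟩

section Main

variable {K : Type u} [LinearOrder K] [WellFoundedLT K] {A : Type u} [LinearOrder A]

/-- The order we build. -/
abbrev M (K A : Type u) [LinearOrder K] [WellFoundedLT K] [LinearOrder A] : Type u :=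
  Lex ((Lex (A ⊕ BddFun K)) × ℚ)

/-- The cut associated to an arbitrary function `g`. -/
def cutOf (g : Lex (K → Bool)) : Set (M K A) :=
  {m | Sum.elim (fun _ => True) (fun f : BddFun K => ¬ g < f.val) (ofLex (ofLex m).1)}

theorem cutOf_mem_iff (g : Lex (K → Bool)) (f : BddFun K) (q : ℚ) :
    toLex (toLex (Sum.inr f : A ⊕ BddFun K), q) ∈ cutOf (A := A) g ↔ ¬ g < f.val :=
  Iff.rfl

theorem cutOf_isCut (g : Lex (K → Bool)) :
    ∀ x y : M K A, y ∈ cutOf (A := A) g → x ≤ y → x ∈ cutOf (A := A) g := by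
  rintro ⟨x1, x2⟩ ⟨y1, y2⟩ hy hxy
  rcases Prod.Lex.le_iff.1 hxy with h1 | ⟨h1, _⟩
  · -- x1 < y1 in the lex sum
    rcases x1 with a | f
    · exact trivial
    · rcases y1 with a' | f'
      · exact absurd h1 Sum.Lex.not_inr_lt_inl
      · have hff' : f < f' := Sum.Lex.inr_lt_inr_iff.1 h1
        have hy' : ¬ g < f'.val := hy
        intro hgf
        exact hy' (hgf.trans (BddFun.lt_def.1 hff'))
  · -- equal first components
    show Sum.elim _ _ (ofLex x1) 
    rw [show x1 = y1 from h1]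
    exact hy

theorem cutOf_mono {g g' : Lex (K → Bool)} (h : g ≤ g') :
    cutOf (A := A) g ⊆ cutOf (A := A) g' := by
  rintro ⟨x1, x2⟩ hx
  rcases x1 with a | f
  · exact trivial
  · exact fun hlt => hx (lt_of_le_of_lt h hlt)

theorem cutOf_exists_mem {g g' : Lex (K → Bool)} (h : g < g') :
    ∃ m : M K A, m ∈ cutOf (A := A) g' ∧ m ∉ cutOf (A := A) g := by
  obtain ⟨i, hagree, hlt⟩ := h
  have hgi : ofLex g i = false := (Bool.lt_iff.1 hlt).1
  have hgi' : ofLex g' i = true := (Bool.lt_iff.1 hlt).2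
  set f0 : K → Bool := fun b => if b ≤ i then ofLex g' b else false with hf0
  have hbdd : ∃ a : K, ∀ b : K, a < b → ofLex (toLex f0) b = false := by
    refine ⟨i, fun b hb => ?_⟩
    simp only [ofLex_toLex, hf0, if_neg (not_le.2 hb)]
  refine ⟨toLex (toLex (Sum.inr ⟨toLex f0, hbdd⟩ : A ⊕ BddFun K), (0 : ℚ)), ?_, ?_⟩
  · refine (cutOf_mem_iff (A := A) _ _ _).2 ?_
    rintro ⟨j, hag, hj⟩
    have h1 : ofLex g' j = false := (Bool.lt_iff.1 hj).1
    have h2 : f0 j = true := (Bool.lt_iff.1 hj).2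
    by_cases hji : j ≤ i
    · simp only [hf0, if_pos hji] at h2; rw [h1] at h2; exact Bool.false_ne_true h2
    · simp only [hf0, if_neg hji] at h2; exact Bool.false_ne_true h2
  · refine fun hm => (cutOf_mem_iff (A := A) _ _ _).1 hm ?_
    refine ⟨i, fun j hj => ?_, ?_⟩
    · show ofLex g j = f0 j
      simp only [hf0, if_pos hj.le]
      exact hagree j hj
    · show ofLex g i < f0 i
      simp only [hf0, if_pos le_rfl, hgi']
      rw [hgi]
      exact Bool.false_lt_true

theorem cutOf_injective : Function.Injective (cutOf (K := K) (A := A)) := by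
  intro g g' h
  by_contra hne
  rcases lt_or_gt_of_ne hne with hlt | hlt
  · obtain ⟨m, hm1, hm2⟩ := cutOf_exists_mem (A := A) hlt
    rw [← h] at hm1; exact hm2 hm1
  · obtain ⟨m, hm1, hm2⟩ := cutOf_exists_mem (A := A) hlt
    rw [h] at hm1; exact hm2 hm1

/-- cardinality bound for BddFun -/
theorem mk_bddFun_le (lam : Cardinal.{u}) (hlam : Cardinal.aleph0 ≤ lam)
    (hK : #K ≤ lam) (hIic : ∀ a : K, (2 : Cardinal.{u}) ^ #(Set.Iic a) ≤ lam) :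
    #(BddFun K) ≤ lam := by
  classical
  have hinj : Function.Injective
      (fun f : BddFun K => (⟨f.2.choose, fun b : Set.Iic f.2.choose => ofLex f.1 b.val⟩ :
        Σ a : K, (Set.Iic a → Bool))) := by
    intro f f' hff
    obtain ⟨h1, h2⟩ := Sigma.mk.inj_iff.1 hff
    apply Subtype.ext
    rw [← h1] at h2
    have h2' : ∀ b : Set.Iic f.2.choose, ofLex f.1 b.val = ofLex f'.1 b.val := by
      intro b
      exact congr_fun (eq_of_heq h2) b
    show f.1 = f'.1
    funext b
    by_cases hb : b ≤ f.2.choose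
    · exact h2' ⟨b, hb⟩
    · show ofLex f.1 b = ofLex f'.1 b
      rw [f.2.choose_spec b (not_le.1 hb)]
      have hb' : f'.2.choose < b := by rw [← h1]; exact not_le.1 hb
      exact (f'.2.choose_spec b hb').symm
  have := Cardinal.mk_le_of_injective hinj
  refine this.trans ?_
  rw [Cardinal.mk_sigma]
  calc Cardinal.sum (fun a : K => #(Set.Iic a → Bool))
      ≤ Cardinal.sum (fun _ : K => lam) := by
        refine Cardinal.sum_le_sum _ _ fun a => ?_
        rw [Cardinal.mk_arrow, Cardinal.mk_bool]
        simpa using hIic a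
    _ = #K * lam := by rw [Cardinal.sum_const, Cardinal.lift_id, Cardinal.lift_id]
    _ ≤ lam * lam := by gcongr
    _ = lam := Cardinal.mul_eq_self hlam

end Main

end ManyCutsAux

/-- For every infinite cardinal `λ` there is a dense linear order without endpoints of
cardinality `λ` with strictly more than `λ` cuts (downward-closed subsets). -/
theorem exists_dense_order_with_many_cuts (lam : Cardinal.{u}) (hlam : Cardinal.aleph0 ≤ lam) :
    ∃ (L : Type u) (_ : LinearOrder L),
      Cardinal.mk L = lam ∧ DenselyOrdered L ∧ NoMaxOrder L ∧ NoMinOrder L ∧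
      lam < Cardinal.mk {S : Set L | ∀ x y : L, y ∈ S → x ≤ y → x ∈ S} := by
  classical
  open ManyCutsAux in
  -- κ : least cardinal with lam < 2 ^ κ
  set κ : Cardinal.{u} := sInf {c : Cardinal.{u} | lam < 2 ^ c} with hκdef
  have hne : {c : Cardinal.{u} | lam < 2 ^ c}.Nonempty := ⟨lam, Cardinal.cantor lam⟩
  have hκmem : lam < 2 ^ κ := csInf_mem hne
  have hκle : κ ≤ lam := csInf_le' (Cardinal.cantor lam)
  have hκmin : ∀ c : Cardinal.{u}, c < κ → (2 : Cardinal.{u}) ^ c ≤ lam := by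
    intro c hc
    by_contra hcon
    have hmem : κ ≤ c :=
      csInf_le' (show c ∈ {c : Cardinal.{u} | lam < 2 ^ c} from not_le.1 hcon)
    exact absurd hc (not_lt.2 hmem)
  have hκinf : Cardinal.aleph0 ≤ κ := by
    by_contra hcon
    have hfin : κ < Cardinal.aleph0 := not_le.1 hcon
    have : (2 : Cardinal.{u}) ^ κ < Cardinal.aleph0 :=
      Cardinal.power_lt_aleph0 (by exact_mod_cast Cardinal.nat_lt_aleph0 2) hfin
    exact absurd (hκmem.trans this) (not_lt.2 hlam)
  -- the index type K and ambient type A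
  set K : Type u := (Cardinal.ord κ).ToType with hKdef
  set A : Type u := (Cardinal.ord lam).ToType with hAdef
  have hmkK : #K = κ := Cardinal.mk_ord_toType κ
  have hmkA : #A = lam := Cardinal.mk_ord_toType lam
  have hIic : ∀ a : K, (2 : Cardinal.{u}) ^ #(Set.Iic a) ≤ lam := by
    intro a
    apply hκmin
    have h1 : #(Set.Iio a) < κ := Cardinal.mk_Iio_ord_toType a
    have h2 : #(Set.Iic a) ≤ #(Set.Iio a) + 1 := by
      rw [← Set.Iio_insert]; exact Cardinal.mk_insert_le
    exact lt_of_le_of_lt h2 (Cardinal.add_lt_of_lt hκinf h1 (lt_of_lt_of_le Cardinal.one_lt_aleph0 hκinf))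
  have hBdd : #(BddFun K) ≤ lam := mk_bddFun_le lam hlam (hmkK ▸ hκle) hIic
  refine ⟨M K A, inferInstance, ?_, ?_, ?_, ?_, ?_⟩
  · -- cardinality
    show #(Lex ((Lex (A ⊕ BddFun K)) × ℚ)) = lam
    have h1 : #(Lex ((Lex (A ⊕ BddFun K)) × ℚ)) = (#A + #(BddFun K)) * Cardinal.aleph0 := by
      show #((Lex (A ⊕ BddFun K)) × ℚ) = _
      rw [Cardinal.mk_prod, show #(Lex (A ⊕ BddFun K)) = #(A ⊕ BddFun K) from rfl,
        Cardinal.mk_sum, Cardinal.mkRat]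
      simp
    rw [h1, hmkA, Cardinal.add_eq_left hlam hBdd,
      Cardinal.mul_eq_left hlam hlam Cardinal.aleph0_ne_zero]
  · exact denselyOrdered_lex_prod _ ℚ
  · infer_instance
  · infer_instance
  · -- many cuts
    have hinj : Function.Injective
        (fun g : Lex (K → Bool) =>
          (⟨cutOf (A := A) g, cutOf_isCut g⟩ :
            {S : Set (M K A) | ∀ x y : M K A, y ∈ S → x ≤ y → x ∈ S})) := by
      intro g g' h
      exact cutOf_injective (Subtype.ext_iff.1 h)
    have h2κ : (2 : Cardinal.{u}) ^ κ ≤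
        #{S : Set (M K A) | ∀ x y : M K A, y ∈ S → x ≤ y → x ∈ S} := by
      have := Cardinal.mk_le_of_injective hinj
      refine le_trans (le_of_eq ?_) this
      show (2 : Cardinal.{u}) ^ κ = #(Lex (K → Bool))
      rw [show #(Lex (K → Bool)) = #(K → Bool) from rfl, Cardinal.mk_arrow,
        Cardinal.mk_bool, hmkK]
      simp
    exact lt_of_lt_of_le hκmem h2κ
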